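/- arXiv:math/9605202 — 2 statements merged into one kernel-verified Lean document; each statement's English description precedes it below -/
import Mathlib

section
/- Let (d_n)_{n∈ℕ} be a sequence of integers with d_n ≥ 1 and let (F_n)_{n∈ℕ} be a sequence of finite fields. For each n, let Γ_n be the subgroup of SL(8d_n, F_n) consisting of all block-diagonal matrices diag(A, B) with A, B ∈ SL(4d_n, F_n) (A acting on the first 4d_n coordinates and B on the last 4d_n coordinates), so Γ_n ≅ SL(4d_n, F_n) × SL(4d_n, F_n). Then ∏_{n∈ℕ} SL(8d_n, F_n) is finitely generated over the subgroup ∏_{n∈ℕ} Γ_n: there exists a finite subset S of ∏_n SL(8d_n, F_n) such that ∏_n SL(8d_n, F_n) = ⟨∏_n Γ_n ∪ S⟩. -/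
open Matrix Pointwise


/-- The block-diagonal matrix `diag(A, B)` of size `8d`, where `A` acts on the first
`4d` coordinates and `B` on the last `4d` coordinates. -/
def diagPair {d : ℕ} {F : Type*} [Zero F]
    (A B : Matrix (Fin (4 * d)) (Fin (4 * d)) F) :
    Matrix (Fin (8 * d)) (Fin (8 * d)) F :=
  Matrix.of fun i j =>
    if hi : (i : ℕ) < 4 * d then
      (if hj : (j : ℕ) < 4 * d then A ⟨i, hi⟩ ⟨j, hj⟩ else 0)
    else
      (if hj : (j : ℕ) < 4 * d then 0
       else B ⟨(i : ℕ) - 4 * d, by have := i.isLt; omega⟩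
              ⟨(j : ℕ) - 4 * d, by have := j.isLt; omega⟩)

namespace Stmt15

variable {G : Type*} [Group G]

def pick (u w : G) (b : Bool) : G := bif b then w else u

/-- Sets of elements expressible as `γ₀ t₁ γ₁ t₂ ⋯ t_k γ_k` where `γᵢ ∈ Γ` and `tᵢ` is
`u` (for `false`) or `w` (for `true`) following the pattern `L`. -/
def pat (Γ : Set G) (u w : G) : List Bool → Set G
  | [] => Γ
  | b :: L => Γ * ({pick u w b} : Set G) * pat Γ u w L

@[simp] lemma pat_nil (Γ : Set G) (u w : G) : pat Γ u w [] = Γ := rfl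
@[simp] lemma pat_cons (Γ : Set G) (u w : G) (b : Bool) (L : List Bool) :
    pat Γ u w (b :: L) = Γ * ({pick u w b} : Set G) * pat Γ u w L := rfl

lemma mem_pat_cons {Γ : Set G} {u w : G} {b : Bool} {L : List Bool} {γ r : G}
    (hγ : γ ∈ Γ) (hr : r ∈ pat Γ u w L) :
    γ * pick u w b * r ∈ pat Γ u w (b :: L) :=
  Set.mul_mem_mul (Set.mul_mem_mul hγ rfl) hr

lemma gamma_mul_pat {Γ : Set G} {u w : G}
    (hΓ : ∀ ⦃a b : G⦄, a ∈ Γ → b ∈ Γ → a * b ∈ Γ) {L : List Bool} {x y : G}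
    (hx : x ∈ Γ) (hy : y ∈ pat Γ u w L) : x * y ∈ pat Γ u w L := by
  induction L generalizing y with
  | nil => exact hΓ hx hy
  | cons b L ih =>
    obtain ⟨p, hp, r, hr, rfl⟩ := hy
    obtain ⟨γ, hγ, t, ht, rfl⟩ := hp
    rcases ht with rfl
    have : x * (γ * pick u w b * r) = (x * γ) * pick u w b * r := by group
    rw [this]
    exact mem_pat_cons (hΓ hx hγ) hr

lemma pat_mul {Γ : Set G} {u w : G}
    (hΓ : ∀ ⦃a b : G⦄, a ∈ Γ → b ∈ Γ → a * b ∈ Γ) {L₁ L₂ : List Bool} {x y : G}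
    (hx : x ∈ pat Γ u w L₁) (hy : y ∈ pat Γ u w L₂) :
    x * y ∈ pat Γ u w (L₁ ++ L₂) := by
  induction L₁ generalizing x with
  | nil => exact gamma_mul_pat hΓ hx hy
  | cons b L ih =>
    obtain ⟨p, hp, r, hr, rfl⟩ := hx
    obtain ⟨γ, hγ, t, ht, rfl⟩ := hp
    rcases ht with rfl
    have : γ * pick u w b * r * y = γ * pick u w b * (r * y) := by group
    rw [List.cons_append, this]
    exact mem_pat_cons hγ (ih hr)

lemma pat_map {H : Type*} [Group H] (f : G →* H) {Γ : Set G} {u w : G} {L : List Bool}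
    {x : G} (hx : x ∈ pat Γ u w L) : f x ∈ pat (f '' Γ) (f u) (f w) L := by
  induction L generalizing x with
  | nil => exact ⟨x, hx, rfl⟩
  | cons b L ih =>
    obtain ⟨p, hp, r, hr, rfl⟩ := hx
    obtain ⟨γ, hγ, t, ht, rfl⟩ := hp
    rcases ht with rfl
    rw [_root_.map_mul, _root_.map_mul]
    have : f (pick u w b) = pick (f u) (f w) b := by cases b <;> rfl
    rw [this]
    exact mem_pat_cons ⟨γ, hγ, rfl⟩ (ih hr)

lemma pat_mono {Γ Γ' : Set G} (h : Γ ⊆ Γ') (u w : G) (L : List Bool) :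
    pat Γ u w L ⊆ pat Γ' u w L := by
  induction L with
  | nil => exact h
  | cons b L ih =>
    simp only [pat_cons]
    exact Set.mul_subset_mul (Set.mul_subset_mul h le_rfl) ih

lemma pat_subset_closure {Γ : Set G} {u w : G} {L : List Bool} :
    pat Γ u w L ⊆ ↑(Subgroup.closure (Γ ∪ {u, w})) := by
  induction L with
  | nil => exact fun x hx => Subgroup.subset_closure (Or.inl hx)
  | cons b L ih =>
    rintro x ⟨p, hp, r, hr, rfl⟩
    obtain ⟨γ, hγ, t, ht, rfl⟩ := hp
    rcases ht with rfl
    refine mul_mem (mul_mem (Subgroup.subset_closure (Or.inl hγ))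
      (Subgroup.subset_closure (Or.inr ?_))) (ih hr)
    cases b <;> simp [pick]

lemma pat_pi {ι : Type*} {Gn : ι → Type*} [∀ i, Group (Gn i)]
    (Γn : ∀ i, Set (Gn i)) (un wn : ∀ i, Gn i) (L : List Bool)
    (g : ∀ i, Gn i) (h : ∀ i, g i ∈ pat (Γn i) (un i) (wn i) L) :
    g ∈ pat {x : ∀ i, Gn i | ∀ i, x i ∈ Γn i} un wn L := by
  induction L generalizing g with
  | nil => exact h
  | cons b L ih =>
    have h' : ∀ i, ∃ γ ∈ Γn i, ∃ r ∈ pat (Γn i) (un i) (wn i) L,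
        g i = γ * pick (un i) (wn i) b * r := by
      intro i
      obtain ⟨p, hp, r, hr, hre⟩ := h i
      obtain ⟨γ, hγ, t, ht, rfl⟩ := hp
      rcases ht with rfl
      exact ⟨γ, hγ, r, hr, hre.symm⟩
    choose γ hγ r hr hgr using h'
    have hg : g = γ * pick un wn b * r := by
      funext i
      have := hgr i
      cases b <;> simpa [pick] using this
    rw [hg]
    exact mem_pat_cons (Γ := {x : ∀ i, Gn i | ∀ i, x i ∈ Γn i}) hγ (ih r hr)

variable {F : Type*} [Field F] {ν : Type*} [Fintype ν] [DecidableEq ν]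

local notation "SL2" => Matrix.SpecialLinearGroup (ν ⊕ ν) F

/-- upper block-unipotent -/
def Em (X : Matrix ν ν F) : Matrix.SpecialLinearGroup (ν ⊕ ν) F :=
  ⟨fromBlocks 1 X 0 1, by rw [det_fromBlocks_zero₂₁]; simp⟩

/-- lower block-unipotent -/
def Fl (Y : Matrix ν ν F) : Matrix.SpecialLinearGroup (ν ⊕ ν) F :=
  ⟨fromBlocks 1 0 Y 1, by rw [det_fromBlocks_zero₁₂]; simp⟩

/-- block diagonal -/
def Ga (A B : Matrix ν ν F) (hA : A.det = 1) (hB : B.det = 1) :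
    Matrix.SpecialLinearGroup (ν ⊕ ν) F :=
  ⟨fromBlocks A 0 0 B, by rw [det_fromBlocks_zero₂₁, hA, hB, one_mul]⟩

@[simp] lemma Em_coe (X : Matrix ν ν F) : (Em X : Matrix (ν ⊕ ν) (ν ⊕ ν) F) = fromBlocks 1 X 0 1 := rfl
@[simp] lemma Fl_coe (Y : Matrix ν ν F) : (Fl Y : Matrix (ν ⊕ ν) (ν ⊕ ν) F) = fromBlocks 1 0 Y 1 := rfl
@[simp] lemma Ga_coe (A B : Matrix ν ν F) (hA hB) :
    (Ga A B hA hB : Matrix (ν ⊕ ν) (ν ⊕ ν) F) = fromBlocks A 0 0 B := rfl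

/-- the Weyl-type element -/
def wl : Matrix.SpecialLinearGroup (ν ⊕ ν) F := Em 1 * Fl (-1) * Em 1

lemma wl_coe : ((wl : SL2) : Matrix (ν ⊕ ν) (ν ⊕ ν) F) = fromBlocks 0 1 (-1) 0 := by
  show ((Em 1 * Fl (-1) * Em 1 : SL2) : Matrix (ν ⊕ ν) (ν ⊕ ν) F) = _
  simp only [Matrix.SpecialLinearGroup.coe_mul, Em_coe, Fl_coe, fromBlocks_multiply]
  norm_num

/-- the block diagonal set -/
def Γb : Set (Matrix.SpecialLinearGroup (ν ⊕ ν) F) :=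
  {g | ∃ A B : Matrix ν ν F, A.det = 1 ∧ B.det = 1 ∧
    (g : Matrix (ν ⊕ ν) (ν ⊕ ν) F) = fromBlocks A 0 0 B}

lemma Ga_mem (A B : Matrix ν ν F) (hA hB) : Ga A B hA hB ∈ (Γb : Set SL2) :=
  ⟨A, B, hA, hB, rfl⟩

lemma Γb_mul : ∀ ⦃x y : SL2⦄, x ∈ (Γb : Set SL2) → y ∈ Γb → x * y ∈ Γb := by
  rintro x y ⟨A, B, hA, hB, hx⟩ ⟨A', B', hA', hB', hy⟩
  refine ⟨A * A', B * B', by simp [hA, hA'], by simp [hB, hB'], ?_⟩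
  rw [Matrix.SpecialLinearGroup.coe_mul, hx, hy, fromBlocks_multiply]
  simp

lemma one_mem_Γb : (1 : SL2) ∈ (Γb : Set SL2) :=
  ⟨1, 1, det_one, det_one, by simp [← fromBlocks_one]⟩

/-- If the block row `[c d]` is surjective, then `c + d * z` is invertible for some `z`. -/
lemma exists_isUnit_add_mul (c d : Matrix ν ν F)
    (h : ∀ y : ν → F, ∃ x₁ x₂ : ν → F, c *ᵥ x₁ + d *ᵥ x₂ = y) :
    ∃ z : Matrix ν ν F, IsUnit (c + d * z) := by
  classical
  set cl := c.mulVecLin with hcl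
  set dl := d.mulVecLin with hdl
  obtain ⟨C', hCC'⟩ := Submodule.exists_isCompl (LinearMap.range cl)
  obtain ⟨K', hKK'⟩ := Submodule.exists_isCompl (LinearMap.ker cl)
  set π := C'.linearProjOfIsCompl (LinearMap.range cl) hCC'.symm with hπ
  set p := (LinearMap.ker cl).linearProjOfIsCompl K' hKK' with hp
  have hsurj : LinearMap.range (π ∘ₗ dl) = ⊤ := by
    rw [LinearMap.range_eq_top]
    intro y
    obtain ⟨x₁, x₂, hx⟩ := h (y : ν → F)
    refine ⟨x₂, ?_⟩
    have h1 : π (c *ᵥ x₁) = 0 :=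
      Submodule.projectionOnto_apply_of_mem_right hCC'.symm (LinearMap.mem_range_self cl x₁)
    have h2 : π ((y : ν → F)) = y := Submodule.linearProjOfIsCompl_apply_left hCC'.symm y
    have h3 := congrArg π hx
    simp only [map_add] at h3
    rw [h1, zero_add, h2] at h3
    exact h3
  obtain ⟨s, hs⟩ := LinearMap.exists_rightInverse_of_surjective _ hsurj
  have hfin : Module.finrank F (LinearMap.ker cl) = Module.finrank F C' := by
    have h1 := LinearMap.finrank_range_add_finrank_ker cl
    have h2 := Submodule.finrank_sup_add_finrank_inf_eq (LinearMap.range cl) C'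
    rw [hCC'.sup_eq_top, hCC'.inf_eq_bot] at h2
    simp only [finrank_top, finrank_bot, add_zero] at h2
    omega
  obtain ⟨iso⟩ := FiniteDimensional.nonempty_linearEquiv_of_finrank_eq hfin
  set ψ := s ∘ₗ (iso : LinearMap.ker cl →ₗ[F] C') ∘ₗ p with hψ
  have key : Function.Injective (cl + dl ∘ₗ ψ) := by
    rw [injective_iff_map_eq_zero]
    intro v hv
    have h1 : π (cl v) = 0 :=
      Submodule.projectionOnto_apply_of_mem_right hCC'.symm (LinearMap.mem_range_self cl v)
    have h2 : π (dl (ψ v)) = iso (p v) := by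
      have : dl (ψ v) = dl (s (iso (p v))) := rfl
      rw [this]
      have := congrArg (fun f : C' →ₗ[F] C' => f (iso (p v))) hs
      simpa using this
    have h0 : π ((cl + dl ∘ₗ ψ) v) = 0 := by rw [hv]; simp
    simp only [LinearMap.add_apply, LinearMap.coe_comp, Function.comp_apply, map_add,
      h1, h2, zero_add] at h0
    have hpv : p v = 0 := by
      apply iso.injective
      rw [iso.map_zero]
      exact h0
    have hψv : ψ v = 0 := by
      have hrfl : ψ v = s (iso (p v)) := rfl
      rw [hrfl, hpv, iso.map_zero, s.map_zero]
    have hclv : cl v = 0 := by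
      have := hv
      simp only [LinearMap.add_apply, LinearMap.coe_comp, Function.comp_apply, hψv,
        map_zero, add_zero] at this
      exact this
    have hvK : v ∈ LinearMap.ker cl := hclv
    have : p v = ⟨v, hvK⟩ := Submodule.linearProjOfIsCompl_apply_left hKK' ⟨v, hvK⟩
    rw [hpv] at this
    have : (0 : LinearMap.ker cl) = ⟨v, hvK⟩ := this
    simpa using congrArg Subtype.val this.symm
  refine ⟨LinearMap.toMatrix' ψ, ?_⟩
  have hmv : (c + d * LinearMap.toMatrix' ψ).mulVecLin = cl + dl ∘ₗ ψ := by
    rw [Matrix.mulVecLin_add, Matrix.mulVecLin_mul]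
    congr 1
    rw [← Matrix.toLin'_apply', ← Matrix.toLin'_apply', Matrix.toLin'_toMatrix', hdl,
      ← Matrix.toLin'_apply']
  rw [Matrix.isUnit_iff_isUnit_det, isUnit_iff_ne_zero]
  intro hdet
  obtain ⟨v, hv0, hv⟩ := (Matrix.exists_mulVec_eq_zero_iff).2 hdet
  apply hv0
  have : (c + d * LinearMap.toMatrix' ψ).mulVecLin v = 0 := by
    rw [Matrix.mulVecLin_apply, hv]
  rw [hmv] at this
  exact key (by simpa using this)

lemma det_list_transvec {κ : Type*} [Fintype κ] [DecidableEq κ]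
    (L : List (TransvectionStruct κ F)) :
    (L.map TransvectionStruct.toMatrix).prod.det = 1 :=
  TransvectionStruct.det_toMatrix_prod L

/-- Every square matrix over `Fin 2 × κ` is the sum of two determinant-one matrices. -/
lemma sum_two_SL_prod {κ : Type*} [Fintype κ] [DecidableEq κ]
    (X : Matrix (Fin 2 × κ) (Fin 2 × κ) F) :
    ∃ A B : Matrix (Fin 2 × κ) (Fin 2 × κ) F, A.det = 1 ∧ B.det = 1 ∧ X = A + B := by
  obtain ⟨L, L', D, hX⟩ := Matrix.Pivot.exists_list_transvec_mul_diagonal_mul_list_transvec X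
  set P := (L.map TransvectionStruct.toMatrix).prod with hP
  set Q := (L'.map TransvectionStruct.toMatrix).prod with hQ
  have hPdet : P.det = 1 := det_list_transvec L
  have hQdet : Q.det = 1 := det_list_transvec L'
  set M : κ → Matrix (Fin 2) (Fin 2) F := fun k => !![0, -1; 1, D (1, k)] with hM
  set N : κ → Matrix (Fin 2) (Fin 2) F := fun k => !![D (0, k), 1; -1, 0] with hN
  have hMN : blockDiagonal M + blockDiagonal N = diagonal D := by
    rw [← blockDiagonal_add]
    have : M + N = fun k => diagonal (fun i : Fin 2 => D (i, k)) := by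
      funext k
      ext i j
      fin_cases i <;> fin_cases j <;>
        simp [hM, hN, diagonal]
    rw [this, blockDiagonal_diagonal]
  have hMdet : (blockDiagonal M).det = 1 := by
    rw [det_blockDiagonal]
    apply Finset.prod_eq_one
    intro k _
    simp [hM, det_fin_two_of]
  have hNdet : (blockDiagonal N).det = 1 := by
    rw [det_blockDiagonal]
    apply Finset.prod_eq_one
    intro k _
    simp [hN, det_fin_two_of]
  refine ⟨P * blockDiagonal M * Q, P * blockDiagonal N * Q, ?_, ?_, ?_⟩
  · simp [det_mul, hPdet, hQdet, hMdet]
  · simp [det_mul, hPdet, hQdet, hNdet]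
  · rw [hX, ← hMN, Matrix.mul_add, Matrix.add_mul]

/-- transported version -/
lemma sum_two_SL {ν : Type*} [Fintype ν] [DecidableEq ν] {κ : Type*} [Fintype κ]
    [DecidableEq κ] (e : ν ≃ Fin 2 × κ) (X : Matrix ν ν F) :
    ∃ A B : Matrix ν ν F, A.det = 1 ∧ B.det = 1 ∧ X = A + B := by
  obtain ⟨A, B, hA, hB, hX⟩ := sum_two_SL_prod (X.submatrix e.symm e.symm)
  refine ⟨A.submatrix e e, B.submatrix e e, ?_, ?_, ?_⟩
  · rw [det_submatrix_equiv_self]; exact hA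
  · rw [det_submatrix_equiv_self]; exact hB
  · have := congrArg (fun M => M.submatrix e e) hX
    simpa [Matrix.submatrix_submatrix, Matrix.submatrix_add] using this

lemma Em_mul (X Y : Matrix ν ν F) : (Em X * Em Y : SL2) = Em (X + Y) := by
  apply Subtype.ext
  rw [Matrix.SpecialLinearGroup.coe_mul, Em_coe, Em_coe, Em_coe, fromBlocks_multiply]
  simp [add_comm]

lemma Fl_mul (X Y : Matrix ν ν F) : (Fl X * Fl Y : SL2) = Fl (X + Y) := by
  apply Subtype.ext
  rw [Matrix.SpecialLinearGroup.coe_mul, Fl_coe, Fl_coe, Fl_coe, fromBlocks_multiply]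
  simp [add_comm]

lemma Fl_inv (X : Matrix ν ν F) : (Fl X : SL2)⁻¹ = Fl (-X) := by
  apply inv_eq_of_mul_eq_one_right
  rw [Fl_mul]
  apply Subtype.ext
  simp [← fromBlocks_one]

lemma det_inv_one {A : Matrix ν ν F} (hA : A.det = 1) : (A⁻¹).det = 1 := by
  rw [Matrix.det_nonsing_inv, hA, Ring.inverse_one]

/-- `E(A)` for `A` of determinant one lies in `Γ ⬝ E(1) ⬝ Γ`. -/
lemma Em_single {A : Matrix ν ν F} (hA : A.det = 1) :
    (Em A : SL2) = Ga A 1 hA det_one * Em 1 * Ga A⁻¹ 1 (det_inv_one hA) det_one := by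
  have hAu : IsUnit A.det := hA ▸ isUnit_one
  apply Subtype.ext
  simp only [Matrix.SpecialLinearGroup.coe_mul, Ga_coe, Em_coe, fromBlocks_multiply,
    Matrix.mul_one, Matrix.one_mul, Matrix.mul_zero, Matrix.zero_mul, add_zero, zero_add,
    Matrix.mul_nonsing_inv _ hAu]

lemma Em_mem (Hsum : ∀ X : Matrix ν ν F, ∃ A B : Matrix ν ν F, A.det = 1 ∧ B.det = 1 ∧ X = A + B)
    (X : Matrix ν ν F) : (Em X : SL2) ∈ pat Γb (Em 1) wl [false, false] := by
  obtain ⟨A, B, hA, hB, rfl⟩ := Hsum X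
  rw [← Em_mul]
  have hmem : ∀ (C : Matrix ν ν F) (hC : C.det = 1), (Em C : SL2) ∈ pat Γb (Em 1) wl [false] := by
    intro C hC
    rw [Em_single hC]
    exact mem_pat_cons (b := false) (Ga_mem _ _ _ _) (Ga_mem _ _ _ _)
  exact pat_mul Γb_mul (hmem A hA) (hmem B hB)

lemma det_neg_one (hE : Even (Fintype.card ν)) : (-1 : Matrix ν ν F).det = 1 := by
  have : (-1 : Matrix ν ν F) = (-1 : F) • (1 : Matrix ν ν F) := by simp
  rw [this, Matrix.det_smul, det_one, mul_one, hE.neg_one_pow]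

lemma Fl_decomp (hE : Even (Fintype.card ν)) (Y : Matrix ν ν F) :
    (Fl Y : SL2) = wl * (Em (-Y) * Ga (-1) (-1) (det_neg_one hE) (det_neg_one hE)) * wl := by
  apply Subtype.ext
  simp only [Matrix.SpecialLinearGroup.coe_mul, wl_coe, Em_coe, Ga_coe, Fl_coe,
    fromBlocks_multiply]
  norm_num

lemma wl_mem : (wl : SL2) ∈ pat Γb (Em 1) wl [true] := by
  have h := mem_pat_cons (b := true) (L := []) (Γ := Γb) (u := (Em 1 : SL2)) (w := wl)
    one_mem_Γb one_mem_Γb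
  simpa [pick] using h

lemma Fl_mem (hE : Even (Fintype.card ν))
    (Hsum : ∀ X : Matrix ν ν F, ∃ A B : Matrix ν ν F, A.det = 1 ∧ B.det = 1 ∧ X = A + B)
    (Y : Matrix ν ν F) : (Fl Y : SL2) ∈ pat Γb (Em 1) wl [true, false, false, true] := by
  rw [Fl_decomp hE Y]
  have h1 : (Em (-Y) * Ga (-1) (-1) (det_neg_one hE) (det_neg_one hE) : SL2)
      ∈ pat Γb (Em 1) wl [false, false] := by
    have := pat_mul (L₂ := []) Γb_mul (Em_mem Hsum (-Y)) (Ga_mem (-1) (-1) (det_neg_one hE) (det_neg_one hE))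
    simpa using this
  have h2 := pat_mul Γb_mul (pat_mul Γb_mul wl_mem h1) wl_mem
  simpa using h2


lemma Fl_zero : (Fl 0 : SL2) = 1 := by
  apply Subtype.ext
  rw [Fl_coe]
  simp [← fromBlocks_one]

/-- The fixed generation pattern. -/
def patL : List Bool :=
  [false, false, true, false, false, true, false, false, true,
   false, false, true, false, false, true, false, false, true]

/-- Main theorem: every element of `SL(ν ⊕ ν, F)` is a word of fixed shape `patL` in
block-diagonal elements and the two fixed elements `Em 1`, `wl`. -/
theorem main_pat [Nonempty ν] (hE : Even (Fintype.card ν))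
    (Hsum : ∀ X : Matrix ν ν F, ∃ A B : Matrix ν ν F, A.det = 1 ∧ B.det = 1 ∧ X = A + B)
    (g : SL2) : g ∈ pat Γb (Em 1) wl patL := by
  classical
  obtain ⟨gm, hdet⟩ := g
  -- we keep referring to the underlying matrix of `g` as `gm`
  set a := gm.toBlocks₁₁ with ha
  set b := gm.toBlocks₁₂ with hb
  set c := gm.toBlocks₂₁ with hc
  set dd := gm.toBlocks₂₂ with hdd
  have hg : gm = fromBlocks a b c dd := (fromBlocks_toBlocks gm).symm
  have hdu : IsUnit gm.det := hdet ▸ isUnit_one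
  have hsurj : ∀ y : ν → F, ∃ x₁ x₂ : ν → F, c *ᵥ x₁ + dd *ᵥ x₂ = y := by
    intro y
    set v := gm⁻¹ *ᵥ (Sum.elim (0 : ν → F) y) with hv
    have hv1 : gm *ᵥ v = Sum.elim (0 : ν → F) y := by
      rw [hv, Matrix.mulVec_mulVec, Matrix.mul_nonsing_inv _ hdu, Matrix.one_mulVec]
    refine ⟨v ∘ Sum.inl, v ∘ Sum.inr, ?_⟩
    have hv2 : gm *ᵥ (Sum.elim (v ∘ Sum.inl) (v ∘ Sum.inr)) = Sum.elim (0 : ν → F) y := by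
      rw [Sum.elim_comp_inl_inr]; exact hv1
    rw [hg, fromBlocks_mulVec] at hv2
    funext i
    have := congrFun hv2 (Sum.inr i)
    simpa using this
  obtain ⟨z, hz⟩ := exists_isUnit_add_mul c dd hsurj
  set c' := c + dd * z with hc'
  set a' := a + b * z with ha'
  have hc'det : IsUnit c'.det := (Matrix.isUnit_iff_isUnit_det _).1 hz
  have hg' : ((@id SL2 ⟨gm, hdet⟩ * Fl z : SL2) : Matrix (ν ⊕ ν) (ν ⊕ ν) F)
      = fromBlocks a' b c' dd := by
    rw [Matrix.SpecialLinearGroup.coe_mul, Fl_coe]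
    show gm * fromBlocks 1 0 z 1 = _
    rw [hg, fromBlocks_multiply]
    simp [ha', hc']
  set s := b - a' * c'⁻¹ * dd with hs
  have idA : ((Em (a' * c'⁻¹) : SL2) : Matrix (ν ⊕ ν) (ν ⊕ ν) F) * fromBlocks 0 s c' dd
      = fromBlocks a' b c' dd := by
    rw [Em_coe, fromBlocks_multiply]
    have h1 : a' * c'⁻¹ * c' = a' := Matrix.nonsing_inv_mul_cancel_right _ _ hc'det
    simp [h1, hs, sub_add_cancel]
  have hMdet : (fromBlocks 0 s c' dd).det = 1 := by
    have h1 : (fromBlocks a' b c' dd).det = 1 := hg' ▸ (@id SL2 ⟨gm, hdet⟩ * Fl z : SL2).prop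
    rw [← idA, det_mul, (Em (a' * c'⁻¹) : SL2).prop, one_mul] at h1
    exact h1
  have idW : ((wl : SL2) : Matrix (ν ⊕ ν) (ν ⊕ ν) F) * fromBlocks 0 s c' dd
      = fromBlocks c' dd 0 (-s) := by
    rw [wl_coe, fromBlocks_multiply]
    norm_num
  have hdetneg : (-s).det = s.det := by
    have : (-s) = (-1 : F) • s := by simp
    rw [this, Matrix.det_smul, hE.neg_one_pow, one_mul]
  have hdets : c'.det * s.det = 1 := by
    have h1 : (fromBlocks c' dd 0 (-s)).det = 1 := by
      rw [← idW, det_mul, (wl : SL2).prop, one_mul, hMdet]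
    rw [det_fromBlocks_zero₂₁, hdetneg] at h1
    exact h1
  have hδ : s.det ≠ 0 := by
    intro h0
    rw [h0, mul_zero] at hdets
    exact one_ne_zero hdets.symm
  have hsu : IsUnit s.det := isUnit_iff_ne_zero.2 hδ
  set i0 : ν := Classical.arbitrary ν
  set X : Matrix ν ν F := diagonal (fun i => if i = i0 then s.det else 1) with hX
  have hXdet : X.det = s.det := by
    rw [hX, det_diagonal]
    simp
  have hXu : IsUnit X.det := by rw [hXdet]; exact hsu
  set P := s * X⁻¹ with hP
  have hPdet : P.det = 1 := by
    rw [hP, det_mul, Matrix.det_nonsing_inv, hXdet, Ring.mul_inverse_cancel _ hsu]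
  set Q := -(c' * X) with hQ
  have hQdet : Q.det = 1 := by
    have hq : Q = (-1 : F) • (c' * X) := by rw [hQ]; simp
    rw [hq, Matrix.det_smul, hE.neg_one_pow, one_mul, det_mul, hXdet, hdets]
  have idw : ((Em X * Fl (-X⁻¹) * Em X : SL2) : Matrix (ν ⊕ ν) (ν ⊕ ν) F)
      = fromBlocks 0 X (-X⁻¹) 0 := by
    rw [Matrix.SpecialLinearGroup.coe_mul, Matrix.SpecialLinearGroup.coe_mul,
      Em_coe, Fl_coe]
    simp [fromBlocks_multiply, Matrix.mul_nonsing_inv _ hXu, Matrix.nonsing_inv_mul _ hXu,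
      Matrix.mul_neg, Matrix.neg_mul]
  have idB : ((Ga P Q hPdet hQdet : SL2) : Matrix (ν ⊕ ν) (ν ⊕ ν) F)
      * fromBlocks 0 X (-X⁻¹) 0 = fromBlocks 0 s c' 0 := by
    rw [Ga_coe, fromBlocks_multiply]
    have h1 : P * X = s := by
      rw [hP, Matrix.nonsing_inv_mul_cancel_right _ _ hXu]
    have h2 : Q * -X⁻¹ = c' := by
      rw [hQ, Matrix.neg_mul, Matrix.mul_neg, neg_neg,
        Matrix.mul_nonsing_inv_cancel_right _ _ hXu]
    simp [h1, h2]
  have idC : ((Fl (dd * s⁻¹) : SL2) : Matrix (ν ⊕ ν) (ν ⊕ ν) F)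
      * fromBlocks 0 s c' 0 = fromBlocks 0 s c' dd := by
    rw [Fl_coe, fromBlocks_multiply]
    have h1 : dd * s⁻¹ * s = dd := Matrix.nonsing_inv_mul_cancel_right _ _ hsu
    simp [h1]
  have hfull : (@id SL2 ⟨gm, hdet⟩ * Fl z : SL2)
      = Em (a' * c'⁻¹) * (Fl (dd * s⁻¹) * (Ga P Q hPdet hQdet
        * (Em X * Fl (-X⁻¹) * Em X))) := by
    apply Subtype.ext
    rw [hg']
    rw [Matrix.SpecialLinearGroup.coe_mul, Matrix.SpecialLinearGroup.coe_mul,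
      Matrix.SpecialLinearGroup.coe_mul, idw, idB, idC, idA]
  have hgeq : (⟨gm, hdet⟩ : SL2) = Em (a' * c'⁻¹) * (Fl (dd * s⁻¹) * (Ga P Q hPdet hQdet
        * (Em X * Fl (-X⁻¹) * Em X))) * Fl (-z) := by
    rw [← hfull, mul_assoc, Fl_mul]
    simp [Fl_zero]
    rfl
  rw [hgeq]
  have m1 := Em_mem Hsum (a' * c'⁻¹)
  have m2 := Fl_mem hE Hsum (dd * s⁻¹)
  have m3 : (Ga P Q hPdet hQdet : SL2) ∈ Γb := Ga_mem _ _ _ _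
  have m4 := Em_mem Hsum X
  have m5 := Fl_mem hE Hsum (-X⁻¹)
  have m6 := Em_mem Hsum X
  have m7 := Fl_mem hE Hsum (-z)
  have mW3 := pat_mul Γb_mul (pat_mul Γb_mul m4 m5) m6
  have mGaW3 := gamma_mul_pat Γb_mul m3 mW3
  have mA := pat_mul Γb_mul m2 mGaW3
  have mB := pat_mul Γb_mul m1 mA
  have mC := pat_mul Γb_mul mB m7
  simpa [patL] using mC

section Assemble

variable (d : ℕ) {F : Type*} [Field F]

/-- The index equivalence matching `diagPair`. -/
def e0 : Fin (8 * d) ≃ (Fin (4 * d) ⊕ Fin (4 * d)) where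
  toFun i := if h : (i : ℕ) < 4 * d then Sum.inl ⟨i, h⟩ else
    Sum.inr ⟨(i : ℕ) - 4 * d, by have := i.isLt; omega⟩
  invFun x := match x with
    | Sum.inl a => ⟨(a : ℕ), by have := a.isLt; omega⟩
    | Sum.inr b => ⟨(b : ℕ) + 4 * d, by have := b.isLt; omega⟩
  left_inv i := by
    by_cases h : (i : ℕ) < 4 * d
    · simp only [dif_pos h]
    · simp only [dif_neg h]
      apply Fin.ext
      simp only []
      have := i.isLt
      omega
  right_inv x := by
    rcases x with a | b
    · have h : ((a : ℕ)) < 4 * d := a.isLt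
      simp only [dif_pos h]
    · have h : ¬ ((b : ℕ) + 4 * d < 4 * d) := by omega
      simp only [dif_neg h]
      congr 1
      apply Fin.ext
      simp

lemma key_eq (A B : Matrix (Fin (4 * d)) (Fin (4 * d)) F) :
    diagPair A B = (fromBlocks A 0 0 B).submatrix (e0 d) (e0 d) := by
  ext i j
  simp only [diagPair, Matrix.of_apply, Matrix.submatrix_apply]
  show _ = fromBlocks A 0 0 B (e0 d i) (e0 d j)
  by_cases hi : (i : ℕ) < 4 * d <;> by_cases hj : (j : ℕ) < 4 * d <;>
    simp only [e0, Equiv.coe_fn_mk, dif_pos, dif_neg, hi, hj, dite_true, dite_false] <;>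
    simp [fromBlocks]

/-- Transport from `SL(4d ⊕ 4d)` to `SL(8d)`. -/
def toSL8 : Matrix.SpecialLinearGroup (Fin (4 * d) ⊕ Fin (4 * d)) F
    →* Matrix.SpecialLinearGroup (Fin (8 * d)) F :=
  MonoidHom.mk' (fun g => ⟨(↑g : Matrix _ _ F).submatrix (e0 d) (e0 d), by
      rw [det_submatrix_equiv_self]; exact g.prop⟩)
    (fun g h => by
      apply Subtype.ext
      show ((↑(g * h) : Matrix _ _ F)).submatrix (e0 d) (e0 d) = _
      rw [Matrix.SpecialLinearGroup.coe_mul, ← Matrix.submatrix_mul_equiv _ _ _ (e0 d) _]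
      rfl)

lemma toSL8_surjective : Function.Surjective (toSL8 d (F := F)) := by
  intro x
  refine ⟨⟨(↑x : Matrix _ _ F).submatrix (e0 d).symm (e0 d).symm, by
    rw [det_submatrix_equiv_self]; exact x.prop⟩, ?_⟩
  apply Subtype.ext
  show ((↑x : Matrix _ _ F).submatrix (e0 d).symm (e0 d).symm).submatrix (e0 d) (e0 d) = ↑x
  rw [Matrix.submatrix_submatrix]
  simp [Equiv.symm_comp_self]

/-- The block-diagonal set in `SL(8d)`. -/
def Γdiag : Set (Matrix.SpecialLinearGroup (Fin (8 * d)) F) :=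
  {x | ∃ A B : Matrix.SpecialLinearGroup (Fin (4 * d)) F,
    (x : Matrix (Fin (8 * d)) (Fin (8 * d)) F) =
      diagPair (A : Matrix (Fin (4 * d)) (Fin (4 * d)) F)
        (B : Matrix (Fin (4 * d)) (Fin (4 * d)) F)}

lemma toSL8_Γb_subset : (toSL8 d (F := F)) '' Γb ⊆ Γdiag d := by
  rintro x ⟨h, ⟨A, B, hA, hB, hcoe⟩, rfl⟩
  refine ⟨⟨A, hA⟩, ⟨B, hB⟩, ?_⟩
  show ((↑h : Matrix _ _ F)).submatrix (e0 d) (e0 d) = diagPair A B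
  rw [hcoe, key_eq]

theorem coord (hd : 1 ≤ d) (g : Matrix.SpecialLinearGroup (Fin (8 * d)) F) :
    g ∈ pat (Γdiag d) (toSL8 d (Em 1)) (toSL8 d wl) patL := by
  haveI : Nonempty (Fin (4 * d)) := ⟨⟨0, by omega⟩⟩
  have hE : Even (Fintype.card (Fin (4 * d))) := by
    rw [Fintype.card_fin]
    exact ⟨2 * d, by ring⟩
  have e : Fin (4 * d) ≃ Fin 2 × Fin (2 * d) :=
    (finCongr (by ring : 4 * d = 2 * (2 * d))).trans finProdFinEquiv.symm
  have Hsum := sum_two_SL (F := F) e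
  obtain ⟨g', rfl⟩ := toSL8_surjective d g
  exact pat_mono (toSL8_Γb_subset d) _ _ _
    (pat_map (toSL8 d) (main_pat hE Hsum g'))

end Assemble

end Stmt15

/-- `∏ n, SL(8dₙ, Fₙ)` is finitely generated over the subgroup
`∏ n, Γₙ` where `Γₙ = {diag(A, B) : A, B ∈ SL(4dₙ, Fₙ)}`. -/
theorem stmt_15 (d : ℕ → ℕ) (hd : ∀ n, 1 ≤ d n) (F : ℕ → Type*)
    [∀ n, Field (F n)] [∀ n, Fintype (F n)] :
    ∃ S : Finset (∀ n, Matrix.SpecialLinearGroup (Fin (8 * d n)) (F n)),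
      Subgroup.closure
        ({g : ∀ n, Matrix.SpecialLinearGroup (Fin (8 * d n)) (F n) |
            ∀ n, ∃ A B : Matrix.SpecialLinearGroup (Fin (4 * d n)) (F n),
              (g n : Matrix (Fin (8 * d n)) (Fin (8 * d n)) (F n)) =
                diagPair (A : Matrix (Fin (4 * d n)) (Fin (4 * d n)) (F n))
                  (B : Matrix (Fin (4 * d n)) (Fin (4 * d n)) (F n))}
          ∪ (S : Set (∀ n, Matrix.SpecialLinearGroup (Fin (8 * d n)) (F n)))) = ⊤ := by
  classical
  set U : ∀ n, Matrix.SpecialLinearGroup (Fin (8 * d n)) (F n) :=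
    fun n => Stmt15.toSL8 (d n) (Stmt15.Em 1) with hU
  set W : ∀ n, Matrix.SpecialLinearGroup (Fin (8 * d n)) (F n) :=
    fun n => Stmt15.toSL8 (d n) Stmt15.wl with hW
  refine ⟨{U, W}, ?_⟩
  refine le_antisymm le_top ?_
  intro g _
  have hcoord : ∀ n, g n ∈ Stmt15.pat (Stmt15.Γdiag (d n)) (U n) (W n) Stmt15.patL :=
    fun n => Stmt15.coord (d n) (hd n) (g n)
  have hpi := Stmt15.pat_pi (fun n => Stmt15.Γdiag (d n)) U W Stmt15.patL g hcoord
  have hcl := Stmt15.pat_subset_closure hpi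
  refine Subgroup.closure_mono ?_ hcl
  intro x hx
  rcases hx with hx | hx
  · exact Or.inl hx
  · refine Or.inr ?_
    simp only [Finset.coe_insert, Finset.coe_singleton]
    exact hx
end

section
/- Let (d_n)_{n∈ℕ} be a sequence of integers with d_n ≥ 1 and let (F_n)_{n∈ℕ} be a sequence of finite fields. For each n, let M_n be the additive group of all 4d_n × 4d_n matrices over F_n, equipped with the action of the group SL(4d_n, F_n) given by left multiplication, S ↦ AS. Then the full direct product ∏_{n∈ℕ} M_n is finitely generated as a module over ∏_{n∈ℕ} SL(4d_n, F_n) acting coordinatewise: there exist finitely many elements m_1, …, m_k ∈ ∏_n M_n such that the smallest additive subgroup of ∏_n M_n containing m_1, …, m_k and closed under the action of every element of ∏_n SL(4d_n, F_n) is all of ∏_n M_n. -/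
open Matrix

lemma sl2_decomp {F : Type*} [Field F] (Y : Matrix (Fin 2) (Fin 2) F) :
    ∃ P : Matrix (Fin 2) (Fin 2) F, P.det = 1 ∧ (Y - P).det = 1 := by
  by_cases he : Y 1 1 ≠ 0
  · refine ⟨!![Y 0 0 - (1 + (Y 0 1 + 1) * (Y 1 0 - 1)) / Y 1 1, -1; 1, 0], ?_, ?_⟩
    · simp [Matrix.det_fin_two_of]
    · rw [Matrix.det_fin_two]
      simp only [Matrix.sub_apply, Matrix.cons_val_zero, Matrix.cons_val_one,
        Matrix.head_cons, Matrix.head_fin_const, Matrix.cons_val', Matrix.empty_val',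
        Matrix.cons_val_fin_one, Matrix.of_apply]
      field_simp
      ring
  · push_neg at he
    by_cases ha : Y 0 0 ≠ 0
    · refine ⟨!![0, -1; 1, Y 1 1 - (1 + (Y 0 1 + 1) * (Y 1 0 - 1)) / Y 0 0], ?_, ?_⟩
      · simp [Matrix.det_fin_two_of]
      · rw [Matrix.det_fin_two]
        simp only [Matrix.sub_apply, Matrix.cons_val_zero, Matrix.cons_val_one,
          Matrix.head_cons, Matrix.head_fin_const, Matrix.cons_val', Matrix.empty_val',
          Matrix.cons_val_fin_one, Matrix.of_apply]
        field_simp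
        ring
    · push_neg at ha
      refine ⟨!![1, Y 0 1; 0, 1], ?_, ?_⟩
      · simp [Matrix.det_fin_two_of]
      · rw [Matrix.det_fin_two]
        simp [Matrix.sub_apply, ha, he]

lemma det_toSquareBlock_eq {N : ℕ} {F : Type*} [Field F] {β : Type*} [DecidableEq β]
    (M : Matrix (Fin N × Fin 2) (Fin N × Fin 2) F)
    (b : Fin N × Fin 2 → β) (k : β) (k₀ : Fin N)
    (hb : ∀ p, b p = k ↔ p.1 = k₀) :
    (M.toSquareBlock b k).det = (Matrix.of fun i j : Fin 2 => M (k₀, i) (k₀, j)).det := by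
  let e : Fin 2 ≃ { p : Fin N × Fin 2 // b p = k } :=
    { toFun := fun i => ⟨(k₀, i), (hb _).mpr rfl⟩
      invFun := fun p => (↑p : Fin N × Fin 2).2
      left_inv := fun i => rfl
      right_inv := fun p => Subtype.ext (Prod.ext ((hb ↑p).mp p.2).symm rfl) }
  rw [← Matrix.det_submatrix_equiv_self e]
  congr 1

lemma sl_sum_decomp {N : ℕ} {F : Type*} [Field F]
    (X : Matrix (Fin N × Fin 2) (Fin N × Fin 2) F) :
    ∃ A B : Matrix (Fin N × Fin 2) (Fin N × Fin 2) F,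
      A.det = 1 ∧ B.det = 1 ∧ X = A + B := by
  choose P hP1 hP2 using fun k : Fin N =>
    sl2_decomp (Matrix.of fun i j : Fin 2 => X (k, i) (k, j))
  set A : Matrix (Fin N × Fin 2) (Fin N × Fin 2) F := Matrix.of fun p q =>
    if q.1 < p.1 then X p q else if p.1 = q.1 then P p.1 p.2 q.2 else 0 with hA
  have hblockA : BlockTriangular A (fun p => OrderDual.toDual p.1) := by
    intro p q hpq
    have h1 : p.1 < q.1 := hpq
    simp [hA, not_lt_of_gt h1, h1.ne]
  have hblockB : BlockTriangular (X - A) (fun p => p.1) := by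
    intro p q hpq
    have h1 : q.1 < p.1 := hpq
    simp [hA, h1]
  have hdetA : A.det = 1 := by
    rw [hblockA.det]
    refine Finset.prod_eq_one fun k _ => ?_
    rw [det_toSquareBlock_eq A (fun p => OrderDual.toDual p.1) k (OrderDual.ofDual k) (fun p => Iff.rfl)]
    convert hP1 (OrderDual.ofDual k) using 2
    ext i j
    simp [hA]
  have hdetB : (X - A).det = 1 := by
    rw [hblockB.det]
    refine Finset.prod_eq_one fun k _ => ?_
    rw [det_toSquareBlock_eq (X - A) (fun p => p.1) k k (fun p => Iff.rfl)]
    convert hP2 k using 2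
    ext i j
    simp [hA, Matrix.sub_apply]
  exact ⟨A, X - A, hdetA, hdetB, by abel⟩

/-- `∏ n, Mₙ` (with `Mₙ` the additive group of `4dₙ × 4dₙ` matrices over `Fₙ`) is finitely
generated as a module over `∏ n, SL(4dₙ, Fₙ)` acting coordinatewise by left
multiplication: there are finitely many elements such that the smallest additive subgroup
containing them and closed under the action is everything. -/
theorem stmt_16 (d : ℕ → ℕ) (hd : ∀ n, 1 ≤ d n) (F : ℕ → Type*)
    [∀ n, Field (F n)] [∀ n, Fintype (F n)] :
    ∃ (k : ℕ) (m : Fin k → ∀ n, Matrix (Fin (4 * d n)) (Fin (4 * d n)) (F n)),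
      ∀ A : AddSubgroup (∀ n, Matrix (Fin (4 * d n)) (Fin (4 * d n)) (F n)),
        (∀ i, m i ∈ A) →
        (∀ (g : ∀ n, Matrix.SpecialLinearGroup (Fin (4 * d n)) (F n))
            (x : ∀ n, Matrix (Fin (4 * d n)) (Fin (4 * d n)) (F n)), x ∈ A →
            (fun n => (g n : Matrix (Fin (4 * d n)) (Fin (4 * d n)) (F n)) * x n) ∈ A) →
        ∀ x : ∀ n, Matrix (Fin (4 * d n)) (Fin (4 * d n)) (F n), x ∈ A := by
  refine ⟨1, fun _ n => 1, fun A h1 hact x => ?_⟩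
  have key : ∀ n, ∃ (a b : Matrix (Fin (4 * d n)) (Fin (4 * d n)) (F n)),
      a.det = 1 ∧ b.det = 1 ∧ x n = a + b := by
    intro n
    have e : (Fin (2 * d n) × Fin 2) ≃ Fin (4 * d n) :=
      finProdFinEquiv.trans (finCongr (by ring))
    obtain ⟨A', B', hA', hB', hsum⟩ := sl_sum_decomp ((x n).submatrix e e)
    refine ⟨A'.submatrix e.symm e.symm, B'.submatrix e.symm e.symm, ?_, ?_, ?_⟩
    · rw [Matrix.det_submatrix_equiv_self]; exact hA'
    · rw [Matrix.det_submatrix_equiv_self]; exact hB'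
    · have h2 := congrArg (fun M => M.submatrix e.symm e.symm) hsum
      simpa [Matrix.submatrix_submatrix, Equiv.self_comp_symm,
        Matrix.submatrix_id_id, Matrix.submatrix_add] using h2
  choose a b ha hb hx using key
  have hg1 := hact (fun n => ⟨a n, ha n⟩) _ (h1 0)
  have hg2 := hact (fun n => ⟨b n, hb n⟩) _ (h1 0)
  have hxx : x = (fun n => a n * (1 : Matrix (Fin (4 * d n)) (Fin (4 * d n)) (F n)))
      + fun n => b n * (1 : Matrix (Fin (4 * d n)) (Fin (4 * d n)) (F n)) := by
    funext n
    show x n = a n * 1 + b n * 1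
    rw [mul_one, mul_one]
    exact hx n
  rw [hxx]
  exact A.add_mem hg1 hg2
end
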